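/- For all integers n ≥ 1 and k ≥ 1, c_n^{(k)} = Σ_{j=1}^{n} c_j^{(k-1)}/j. -/

import Mathlib

/-- Roman harmonic number `c_n^{(k)}` as a rational number. -/
def romanHarmonic (n k : ℕ) : ℚ :=
  ∑ j ∈ Finset.Icc 1 n, (-1 : ℚ) ^ (j - 1) * (n.choose j) / (j : ℚ) ^ k

lemma romanHarmonic_key (n k : ℕ) (hk : 1 ≤ k) :
    romanHarmonic (n + 1) k
      = romanHarmonic n k + romanHarmonic (n + 1) (k - 1) / (n + 1 : ℚ) := by
  have h1 : romanHarmonic n k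
      = ∑ j ∈ Finset.Icc 1 (n + 1), (-1 : ℚ) ^ (j - 1) * (n.choose j) / (j : ℚ) ^ k := by
    rw [romanHarmonic, Finset.sum_Icc_succ_top (by omega)]
    simp [Nat.choose_succ_self]
  have h2 : romanHarmonic (n + 1) (k - 1) / (n + 1 : ℚ)
      = ∑ j ∈ Finset.Icc 1 (n + 1), (-1 : ℚ) ^ (j - 1) * (n.choose (j - 1)) / (j : ℚ) ^ k := by
    rw [romanHarmonic, Finset.sum_div]
    apply Finset.sum_congr rfl
    intro j hj
    simp only [Finset.mem_Icc] at hj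
    have hj1 : 1 ≤ j := hj.1
    have hcn : (n + 1) * n.choose (j - 1) = (n + 1).choose j * j := by
      have := Nat.add_one_mul_choose_eq n (j - 1)
      simpa [Nat.succ_eq_add_one, Nat.sub_add_cancel hj1] using this
    have hc : ((n : ℚ) + 1) * (n.choose (j - 1)) = ((n + 1).choose j : ℚ) * j := by
      exact_mod_cast congrArg (Nat.cast : ℕ → ℚ) hcn
    have hkpow : (j : ℚ) ^ k = (j : ℚ) ^ (k - 1) * j := by
      rw [← pow_succ]; congr 1; omega
    have hjne : (j : ℚ) ≠ 0 := by positivity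
    have hnne : ((n : ℚ) + 1) ≠ 0 := by positivity
    rw [hkpow]
    field_simp
    linear_combination (-(1 : ℚ)) * hc
  rw [h1, h2, ← Finset.sum_add_distrib, romanHarmonic]
  apply Finset.sum_congr rfl
  intro j hj
  simp only [Finset.mem_Icc] at hj
  have hcs : (n + 1).choose j = n.choose j + n.choose (j - 1) := by
    obtain ⟨j, rfl⟩ : ∃ m, j = m + 1 := ⟨j - 1, by omega⟩
    simp [Nat.choose_succ_succ, Nat.add_comm]
  rw [hcs]
  push_cast
  ring

theorem roman_harmonic_nested_sum (n k : ℕ) (hn : 1 ≤ n) (hk : 1 ≤ k) :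
    romanHarmonic n k = ∑ j ∈ Finset.Icc 1 n, romanHarmonic j (k - 1) / (j : ℚ) := by
  induction n, hn using Nat.le_induction with
  | base => simp [romanHarmonic]
  | succ n hn ih =>
    rw [Finset.sum_Icc_succ_top (by omega), ← ih, romanHarmonic_key n k hk]
    push_cast
    ring
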